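/- arXiv:2001.07806 — 7 statements merged into one kernel-verified Lean document; each statement's English description precedes it below -/
import Mathlib

section
/- Let A be an n×n matrix over the max-plus semiring with Tr(A) := max(tr A, tr A², …, tr Aⁿ) ≤ 0. Then the Kleene star A* := I ⊕ A ⊕ A² ⊕ ⋯ ⊕ A^{n-1} satisfies A* ≥ A^k entrywise for every integer k ≥ 0. -/
noncomputable section

/-- The max-plus carrier: ℝ ∪ {-∞}, with ⊥ playing the role of -∞. -/
abbrev MP := WithBot ℝ

/-- Max-plus matrix product: (A⊗B)_ik = max_j (a_ij + b_jk). -/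
def mpMul {m n p : ℕ} (A : Matrix (Fin m) (Fin n) MP) (B : Matrix (Fin n) (Fin p) MP) :
    Matrix (Fin m) (Fin p) MP :=
  fun i k => Finset.univ.sup fun j => A i j + B j k

/-- Max-plus matrix-vector product: (Ax)_i = max_j (a_ij + x_j). -/
def mpMulVec {m n : ℕ} (A : Matrix (Fin m) (Fin n) MP) (x : Fin n → MP) : Fin m → MP :=
  fun i => Finset.univ.sup fun j => A i j + x j

/-- Conjugate (multiplicative inverse transpose): (A⁻)_ij = -a_ji if a_ji ≠ -∞, else -∞. -/
def mpConj {m n : ℕ} (A : Matrix (Fin m) (Fin n) MP) : Matrix (Fin n) (Fin m) MP :=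
  fun i j => (A j i).map fun r => -r

/-- Tropical identity matrix: 0 on the diagonal, -∞ elsewhere. -/
def mpId (n : ℕ) : Matrix (Fin n) (Fin n) MP :=
  fun i j => if i = j then (0 : MP) else ⊥

/-- Tropical matrix powers, A⁰ = I. -/
def mpPow {n : ℕ} (A : Matrix (Fin n) (Fin n) MP) : ℕ → Matrix (Fin n) (Fin n) MP
  | 0 => mpId n
  | k + 1 => mpMul A (mpPow A k)

/-- Tropical trace: tr A = max_i a_ii. -/
def mpTr {n : ℕ} (A : Matrix (Fin n) (Fin n) MP) : MP :=
  Finset.univ.sup fun i => A i i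

/-- Tr(A) = tr A ⊕ tr A² ⊕ ⋯ ⊕ tr Aⁿ. -/
def mpTrFun {n : ℕ} (A : Matrix (Fin n) (Fin n) MP) : MP :=
  (Finset.Icc 1 n).sup fun k => mpTr (mpPow A k)

/-- Bounded Kleene star: A* = I ⊕ A ⊕ ⋯ ⊕ A^{n-1}. -/
def mpStar {n : ℕ} (A : Matrix (Fin n) (Fin n) MP) : Matrix (Fin n) (Fin n) MP :=
  fun i j => (Finset.range n).sup fun k => mpPow A k i j

/-- Entrywise max of matrices: A ⊕ B. -/
def mpAdd {m n : ℕ} (A B : Matrix (Fin m) (Fin n) MP) : Matrix (Fin m) (Fin n) MP :=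
  fun i j => A i j ⊔ B i j

/-- Strictly row-monomial: exactly one entry ≠ -∞ in each row. -/
def RowMonomial {m n : ℕ} (A : Matrix (Fin m) (Fin n) MP) : Prop :=
  ∀ i, ∃! j, A i j ≠ ⊥

/-- Row-regular: at least one entry ≠ -∞ in each row. -/
def RowRegular {m n : ℕ} (A : Matrix (Fin m) (Fin n) MP) : Prop :=
  ∀ i, ∃ j, A i j ≠ ⊥

/-- Regular vector: all entries finite. -/
def Regular {n : ℕ} (x : Fin n → MP) : Prop := ∀ j, x j ≠ ⊥

/-- Weight of a walk of length `k` along `p`. -/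
def mpW {n : ℕ} (A : Matrix (Fin n) (Fin n) MP) (p : ℕ → Fin n) (k : ℕ) : MP :=
  ∑ t ∈ Finset.range k, A (p t) (p (t + 1))

lemma mpW_le_pow {n : ℕ} (A : Matrix (Fin n) (Fin n) MP) :
    ∀ (k : ℕ) (p : ℕ → Fin n), mpW A p k ≤ mpPow A k (p 0) (p k) := by
  intro k
  induction k with
  | zero =>
    intro p
    simp [mpW, mpPow, mpId]
  | succ k ih =>
    intro p
    have hW : mpW A p (k + 1) = A (p 0) (p 1) + mpW A (fun t => p (t + 1)) k := by
      rw [mpW, Finset.sum_range_succ']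
      rw [add_comm]
      rfl
    rw [hW]
    have h1 : A (p 0) (p 1) + mpW A (fun t => p (t + 1)) k
        ≤ A (p 0) (p 1) + mpPow A k (p 1) (p (k + 1)) := by
      exact add_le_add_right (ih fun t => p (t + 1)) _
    refine h1.trans ?_
    show _ ≤ mpMul A (mpPow A k) (p 0) (p (k + 1))
    exact Finset.le_sup (f := fun l => A (p 0) l + mpPow A k l (p (k + 1)))
      (Finset.mem_univ (p 1))

lemma pow_le_mpW {n : ℕ} (A : Matrix (Fin n) (Fin n) MP) :
    ∀ (k : ℕ) (i j : Fin n), mpPow A k i j = ⊥ ∨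
      ∃ p : ℕ → Fin n, p 0 = i ∧ p k = j ∧ mpPow A k i j ≤ mpW A p k := by
  intro k
  induction k with
  | zero =>
    intro i j
    by_cases hij : i = j
    · subst hij
      exact Or.inr ⟨fun _ => i, rfl, rfl, by simp [mpW, mpPow, mpId]⟩
    · exact Or.inl (by simp [mpPow, mpId, hij])
  | succ k ih =>
    intro i j
    have hne : (Finset.univ : Finset (Fin n)).Nonempty := ⟨i, Finset.mem_univ i⟩
    obtain ⟨l, -, hl⟩ := Finset.exists_mem_eq_sup Finset.univ hne
      (fun l => A i l + mpPow A k l j)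
    have hpow : mpPow A (k + 1) i j = A i l + mpPow A k l j := hl
    rcases ih l j with hbot | ⟨p, hp0, hpk, hple⟩
    · left
      rw [hpow, hbot]
      simp
    · right
      refine ⟨fun t => match t with | 0 => i | t + 1 => p t, rfl, hpk, ?_⟩
      have hW : mpW A (fun t => match t with | 0 => i | t + 1 => p t) (k + 1)
          = A i (p 0) + mpW A p k := by
        rw [mpW, Finset.sum_range_succ', add_comm]
        rfl
      rw [hpow, hW, hp0]
      exact add_le_add_right hple _

lemma mpW_splice {n : ℕ} (A : Matrix (Fin n) (Fin n) MP) (p : ℕ → Fin n)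
    {s t k : ℕ} (hst : s < t) (htk : t ≤ k) (hp : p s = p t) :
    mpW A p k = mpW A (fun u => if u < s then p u else p (u + (t - s))) (k - (t - s))
      + ∑ u ∈ Finset.Ico s t, A (p u) (p (u + 1)) := by
  set d := t - s with hd
  set q : ℕ → Fin n := fun u => if u < s then p u else p (u + d) with hq
  set E : ℕ → MP := fun u => A (p u) (p (u + 1)) with hE
  have hsd : s + d = t := by omega
  have hsm : s ≤ k - d := by omega
  have h1 : mpW A p k = (∑ u ∈ Finset.Ico 0 s, E u + ∑ u ∈ Finset.Ico s t, E u)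
      + ∑ u ∈ Finset.Ico t k, E u := by
    rw [Finset.sum_Ico_consecutive E (Nat.zero_le s) hst.le,
      Finset.sum_Ico_consecutive E (Nat.zero_le t) htk]
    rw [mpW, Finset.range_eq_Ico]
  have h2 : mpW A q (k - d) = ∑ u ∈ Finset.Ico 0 s, E u + ∑ u ∈ Finset.Ico t k, E u := by
    have hsplit : mpW A q (k - d)
        = ∑ u ∈ Finset.Ico 0 s, A (q u) (q (u + 1)) + ∑ u ∈ Finset.Ico s (k - d), A (q u) (q (u + 1)) := by
      rw [Finset.sum_Ico_consecutive _ (Nat.zero_le s) hsm, mpW, Finset.range_eq_Ico]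
    rw [hsplit]
    congr 1
    · apply Finset.sum_congr rfl
      intro u hu
      have hus : u < s := (Finset.mem_Ico.mp hu).2
      have hqu : q u = p u := by simp [hq, hus]
      have hqu1 : q (u + 1) = p (u + 1) := by
        by_cases h1s : u + 1 < s
        · simp [hq, h1s]
        · have : u + 1 = s := by omega
          simp only [hq, h1s, if_false, this, hsd]
          rw [hp, ← this]
          simp
      rw [hqu, hqu1]
    · rw [Finset.sum_Ico_eq_sum_range, Finset.sum_Ico_eq_sum_range]
      have hlen : k - d - s = k - t := by omega
      rw [hlen]
      apply Finset.sum_congr rfl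
      intro u _
      have h1 : ¬ (s + u < s) := by omega
      have h2 : ¬ (s + u + 1 < s) := by omega
      simp only [hq, h1, h2, if_false, hE]
      congr 2 <;> omega
  rw [h1, h2]
  ac_rfl

theorem stmt5 {n : ℕ} (A : Matrix (Fin n) (Fin n) MP) (h : mpTrFun A ≤ 0) :
    ∀ k : ℕ, ∀ i j, mpPow A k i j ≤ mpStar A i j := by
  intro k
  induction k using Nat.strong_induction_on with
  | _ k IH =>
    intro i j
    rcases Nat.lt_or_ge k n with hk | hk
    · exact Finset.le_sup (f := fun l => mpPow A l i j) (Finset.mem_range.mpr hk)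
    · have hn : 0 < n := i.pos
      rcases pow_le_mpW A k i j with hbot | ⟨p, hp0, hpk, hple⟩
      · rw [hbot]; exact bot_le
      · -- pigeonhole: two equal vertices among p 0, …, p n
        obtain ⟨a, b, hab, hfab⟩ :=
          Fintype.exists_ne_map_eq_of_card_lt (fun a : Fin (n + 1) => p a) (by simp)
        obtain ⟨s, t, hst, htn, hpst⟩ : ∃ s t : ℕ, s < t ∧ t ≤ n ∧ p s = p t := by
          rcases Nat.lt_or_ge a.val b.val with hlt | hge
          · exact ⟨a, b, hlt, Nat.lt_succ_iff.mp b.isLt, hfab⟩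
          · have : (b : ℕ) < a := lt_of_le_of_ne hge (fun hh => hab (Fin.ext hh.symm))
            exact ⟨b, a, this, Nat.lt_succ_iff.mp a.isLt, hfab.symm⟩
        set d := t - s with hd
        have hd1 : 0 < d := by omega
        have htk : t ≤ k := le_trans htn hk
        set q : ℕ → Fin n := fun u => if u < s then p u else p (u + d) with hq
        -- the cycle weight is ≤ 0
        have hC : ∑ u ∈ Finset.Ico s t, A (p u) (p (u + 1)) ≤ 0 := by
          have hWc : ∑ u ∈ Finset.Ico s t, A (p u) (p (u + 1))
              = mpW A (fun u => p (s + u)) d := by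
            rw [Finset.sum_Ico_eq_sum_range, mpW]
            apply Finset.sum_congr rfl
            intro u _
            congr 2 <;> omega
          have h1 : mpW A (fun u => p (s + u)) d ≤ mpPow A d (p s) (p (s + d)) :=
            mpW_le_pow A d (fun u => p (s + u))
          have hsd : s + d = t := by omega
          have h2 : mpPow A d (p s) (p s) ≤ mpTr (mpPow A d) :=
            Finset.le_sup (f := fun l => mpPow A d l l) (Finset.mem_univ (p s))
          have h3 : mpTr (mpPow A d) ≤ mpTrFun A :=
            Finset.le_sup (f := fun l => mpTr (mpPow A l))
              (Finset.mem_Icc.mpr ⟨hd1, by omega⟩)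
          rw [hWc]
          refine le_trans h1 ?_
          rw [hsd, ← hpst]
          exact le_trans h2 (le_trans h3 h)
        have hsplice := mpW_splice A p hst htk hpst
        have h2 : mpW A p k ≤ mpW A q (k - d) := by
          rw [hsplice]
          calc mpW A q (k - d) + ∑ u ∈ Finset.Ico s t, A (p u) (p (u + 1))
              ≤ mpW A q (k - d) + 0 := add_le_add_right hC _
            _ = mpW A q (k - d) := add_zero _
        have hq0 : q 0 = i := by
          by_cases h0s : 0 < s
          · simp [hq, h0s, hp0]
          · simp only [hq]
            rw [if_neg h0s]
            have h0d : (0 : ℕ) + d = t := by omega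
            have hs0 : s = 0 := by omega
            rw [h0d, ← hpst, hs0, hp0]
        have hqm : q (k - d) = j := by
          have h1 : ¬ (k - d < s) := by omega
          simp only [hq, h1, if_false]
          have : k - d + d = k := by omega
          rw [this, hpk]
        have h3 : mpW A q (k - d) ≤ mpPow A (k - d) i j := by
          have := mpW_le_pow A (k - d) q
          rw [hq0, hqm] at this
          exact this
        have h4 : mpPow A (k - d) i j ≤ mpStar A i j := IH (k - d) (by omega) i j
        exact le_trans hple (le_trans h2 (le_trans h3 h4))
end
end

section
/- Let A be an n×n matrix over the max-plus semiring with Tr(A) = max(tr A, …, tr Aⁿ) ≤ 0, and let A* = I ⊕ A ⊕ ⋯ ⊕ A^{n-1}. Then for every vector u ∈ (ℝ∪{-∞})ⁿ, the vector x = A*u satisfies A x ≤ x; moreover, if u is regular (all entries finite), then x is regular. -/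
noncomputable section

-- Helper lemmas ------------------------------------------------------------

lemma mp_add_sup {ι : Type*} (s : Finset ι) (f : ι → MP) (a : MP) :
    a + s.sup f = s.sup fun x => a + f x := by
  induction s using Finset.cons_induction with
  | empty => simp
  | cons x s hx ih =>
    rw [Finset.sup_cons, Finset.sup_cons, ← ih]
    exact Monotone.map_sup (fun _ _ h => add_le_add_right h a) _ _

/-- Weight of the length-`k` walk `p 0, p 1, …, p k`. -/
def mpWt {n : ℕ} (A : Matrix (Fin n) (Fin n) MP) (p : ℕ → Fin n) (k : ℕ) : MP :=
  ∑ t ∈ Finset.range k, A (p t) (p (t + 1))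

lemma mpWt_succ' {n : ℕ} (A : Matrix (Fin n) (Fin n) MP) (p : ℕ → Fin n) (k : ℕ) :
    mpWt A p (k + 1) = A (p 0) (p 1) + mpWt A (fun t => p (t + 1)) k := by
  rw [mpWt, Finset.sum_range_succ' _ k, add_comm]; rfl

lemma mpWt_add {n : ℕ} (A : Matrix (Fin n) (Fin n) MP) (p : ℕ → Fin n) (a b : ℕ) :
    mpWt A p (a + b) = mpWt A p a + mpWt A (fun v => p (a + v)) b := by
  rw [mpWt, Finset.sum_range_add]; rfl

lemma mpWt_le_pow {n : ℕ} (A : Matrix (Fin n) (Fin n) MP) :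
    ∀ (k : ℕ) (p : ℕ → Fin n), mpWt A p k ≤ mpPow A k (p 0) (p k) := by
  intro k
  induction k with
  | zero => intro p; simp [mpWt, mpPow, mpId]
  | succ k ih =>
    intro p
    rw [mpWt_succ']
    have h1 : A (p 0) (p 1) + mpWt A (fun t => p (t + 1)) k ≤
        A (p 0) (p 1) + mpPow A k (p 1) (p (k + 1)) :=
      add_le_add_right (ih fun t => p (t + 1)) _
    refine h1.trans ?_
    exact Finset.le_sup (f := fun j => A (p 0) j + mpPow A k j (p (k + 1)))
      (Finset.mem_univ (p 1))

lemma pow_le_mpWt {n : ℕ} (A : Matrix (Fin n) (Fin n) MP) :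
    ∀ (k : ℕ) (i j : Fin n), ∃ p : ℕ → Fin n,
      p 0 = i ∧ mpPow A k i j ≤ mpWt A p k ∧ (mpPow A k i j ≠ ⊥ → p k = j) := by
  intro k
  induction k with
  | zero =>
    intro i j
    by_cases hij : i = j
    · exact ⟨fun _ => i, rfl, by simp [mpWt, mpPow, mpId, hij], fun _ => hij⟩
    · refine ⟨fun _ => i, rfl, ?_, ?_⟩
      · simp [mpPow, mpId, hij]
      · intro hb; exact absurd (by simp [mpPow, mpId, hij]) hb
  | succ k ih =>
    intro i j
    have hne : (Finset.univ : Finset (Fin n)).Nonempty := ⟨i, Finset.mem_univ i⟩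
    obtain ⟨m, -, hm⟩ := Finset.exists_mem_eq_sup Finset.univ hne
      (fun m => A i m + mpPow A k m j)
    obtain ⟨p, hp0, hple, hpj⟩ := ih m j
    refine ⟨fun t => Nat.casesOn t i p, rfl, ?_, ?_⟩
    · calc mpPow A (k + 1) i j = A i m + mpPow A k m j := hm
        _ ≤ A i m + mpWt A p k := add_le_add_right hple _
        _ = mpWt A (fun t => Nat.casesOn t i p) (k + 1) := by
            rw [mpWt_succ']
            show A i m + mpWt A p k = A i (p 0) + mpWt A p k
            rw [hp0]
    · intro hb
      have hmb : mpPow A k m j ≠ ⊥ := by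
        intro hc
        apply hb
        have : mpPow A (k + 1) i j = A i m + mpPow A k m j := hm
        rw [this, hc]; simp
      exact hpj hmb

lemma pow_n_le_star {n : ℕ} (A : Matrix (Fin n) (Fin n) MP) (h : mpTrFun A ≤ 0)
    (i j : Fin n) : mpPow A n i j ≤ mpStar A i j := by
  by_cases hb : mpPow A n i j = ⊥
  · rw [hb]; exact bot_le
  obtain ⟨p, hp0, hle, hpj⟩ := pow_le_mpWt A n i j
  have hpn : p n = j := hpj hb
  -- pigeonhole
  have hni : ¬ Function.Injective (fun u : Fin (n + 1) => p u) := by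
    intro hinj
    have := Fintype.card_le_of_injective _ hinj
    simp at this
  rw [Function.not_injective_iff] at hni
  obtain ⟨a, b, hab, hne⟩ := hni
  obtain ⟨s, t, hst, htn, hpst⟩ :
      ∃ s t : ℕ, s < t ∧ t ≤ n ∧ p s = p t := by
    rcases lt_or_gt_of_ne hne with hlt | hlt
    · exact ⟨a, b, Fin.lt_iff_val_lt_val.mp hlt, Nat.lt_succ_iff.mp b.isLt, hab⟩
    · exact ⟨b, a, Fin.lt_iff_val_lt_val.mp hlt, Nat.lt_succ_iff.mp a.isLt, hab.symm⟩
  set d := t - s with hd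
  set e := n - t with he
  set q : ℕ → Fin n := fun u => if u < s then p u else p (u + d) with hq
  have hsd : s + d = t := by omega
  have hqs : ∀ u ≤ s, q u = p u := by
    intro u hu
    rcases lt_or_eq_of_le hu with h' | h'
    · simp [hq, h']
    · subst h'
      simp only [hq, lt_irrefl, if_neg (lt_irrefl u)]
      rw [show u + d = t from by omega, ← hpst]
  -- split the walk
  have hsplit : mpWt A p n =
      mpWt A p s + (mpWt A (fun v => p (s + v)) d + mpWt A (fun v => p (t + v)) e) := by
    have h1 : mpWt A p n = mpWt A p (s + (d + e)) := by congr 1; omega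
    rw [h1, mpWt_add, mpWt_add]
    have : (fun v => p (s + (d + v))) = fun v => p (t + v) := by
      funext v; congr 1; omega
    rw [this]
  have hqsum : mpWt A q (s + e) = mpWt A p s + mpWt A (fun v => p (t + v)) e := by
    rw [mpWt_add]
    congr 1
    · refine Finset.sum_congr rfl ?_
      intro u hu
      rw [Finset.mem_range] at hu
      rw [hqs u (le_of_lt hu), hqs (u + 1) hu]
    · have : (fun v => q (s + v)) = fun v => p (t + v) := by
        funext v
        simp only [hq, if_neg (by omega : ¬ s + v < s)]
        congr 1; omega
      rw [this]
  have hcyc : mpWt A (fun v => p (s + v)) d ≤ 0 := by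
    have h1 := mpWt_le_pow A d (fun v => p (s + v))
    simp only [Nat.add_zero, hsd] at h1
    rw [← hpst] at h1
    refine h1.trans ?_
    have h2 : mpPow A d (p s) (p s) ≤ mpTr (mpPow A d) :=
      Finset.le_sup (f := fun i => mpPow A d i i) (Finset.mem_univ (p s))
    refine h2.trans (le_trans ?_ h)
    exact Finset.le_sup (f := fun k => mpTr (mpPow A k))
      (Finset.mem_Icc.mpr ⟨by omega, by omega⟩)
  have hmain : mpWt A p n ≤ mpWt A q (s + e) := by
    rw [hsplit, hqsum]
    refine add_le_add_right ?_ _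
    calc mpWt A (fun v => p (s + v)) d + mpWt A (fun v => p (t + v)) e
        ≤ 0 + mpWt A (fun v => p (t + v)) e := add_le_add_left hcyc _
      _ = mpWt A (fun v => p (t + v)) e := zero_add _
  have hq0 : q 0 = i := by
    rcases Nat.eq_zero_or_pos s with hs | hs
    · show (if (0:ℕ) < s then p 0 else p (0 + d)) = i
      rw [if_neg (by omega : ¬ (0:ℕ) < s), show 0 + d = t from by omega, ← hpst, hs]
      exact hp0
    · show (if (0:ℕ) < s then p 0 else p (0 + d)) = i
      rw [if_pos hs]; exact hp0
  have hqend : q (s + e) = j := by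
    show (if s + e < s then p (s + e) else p (s + e + d)) = j
    rw [if_neg (by omega : ¬ s + e < s), show s + e + d = n from by omega]
    exact hpn
  have hfin := (hle.trans hmain).trans (mpWt_le_pow A (s + e) q)
  rw [show q 0 = i from hq0, hqend] at hfin
  refine hfin.trans ?_
  exact Finset.le_sup (f := fun k => mpPow A k i j)
    (Finset.mem_range.mpr (by omega : s + e < n))

lemma pow_le_star {n : ℕ} (A : Matrix (Fin n) (Fin n) MP) (h : mpTrFun A ≤ 0)
    {k : ℕ} (hk : k ≤ n) (i j : Fin n) : mpPow A k i j ≤ mpStar A i j := by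
  rcases lt_or_eq_of_le hk with hlt | rfl
  · exact Finset.le_sup (f := fun k => mpPow A k i j) (Finset.mem_range.mpr hlt)
  · exact pow_n_le_star A h i j

theorem stmt6 {n : ℕ} (A : Matrix (Fin n) (Fin n) MP) (h : mpTrFun A ≤ 0) (u : Fin n → MP) :
    (∀ i, mpMulVec A (mpMulVec (mpStar A) u) i ≤ mpMulVec (mpStar A) u i) ∧
      (Regular u → Regular (mpMulVec (mpStar A) u)) := by
  constructor
  · intro i
    show Finset.univ.sup (fun j => A i j + mpMulVec (mpStar A) u j) ≤ _
    refine Finset.sup_le ?_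
    intro j _
    have hxj : mpMulVec (mpStar A) u j = Finset.univ.sup fun l => mpStar A j l + u l := rfl
    rw [hxj, mp_add_sup]
    refine Finset.sup_le ?_
    intro l _
    have hstar : A i j + mpStar A j l ≤ mpStar A i l := by
      have heq : A i j + mpStar A j l =
          (Finset.range n).sup fun k => A i j + mpPow A k j l := mp_add_sup _ _ _
      rw [heq]
      refine Finset.sup_le ?_
      intro k hk
      rw [Finset.mem_range] at hk
      have h1 : A i j + mpPow A k j l ≤ mpPow A (k + 1) i l :=
        Finset.le_sup (f := fun m => A i m + mpPow A k m l) (Finset.mem_univ j)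
      exact h1.trans (pow_le_star A h (by omega) i l)
    calc A i j + (mpStar A j l + u l) = (A i j + mpStar A j l) + u l := (add_assoc _ _ _).symm
      _ ≤ mpStar A i l + u l := add_le_add_left hstar _
      _ ≤ mpMulVec (mpStar A) u i :=
          Finset.le_sup (f := fun l => mpStar A i l + u l) (Finset.mem_univ l)
  · intro hu i
    have h1 : u i ≤ mpMulVec (mpStar A) u i := by
      have h2 : mpStar A i i + u i ≤ mpMulVec (mpStar A) u i :=
        Finset.le_sup (f := fun l => mpStar A i l + u l) (Finset.mem_univ i)
      have h3 : (0 : MP) ≤ mpStar A i i := by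
        have h4 : mpPow A 0 i i ≤ mpStar A i i :=
          Finset.le_sup (f := fun k => mpPow A k i i) (Finset.mem_range.mpr i.pos)
        simpa [mpPow, mpId] using h4
      calc u i = 0 + u i := (zero_add _).symm
        _ ≤ mpStar A i i + u i := add_le_add_left h3 _
        _ ≤ mpMulVec (mpStar A) u i := h2
    intro hb
    exact hu i (le_bot_iff.mp (hb ▸ h1))
end
end

section
/- Let A be an n×n matrix over the max-plus semiring. If the inequality Ax ≤ x has a regular solution x (all entries of x finite), then Tr(A) = max(tr A, tr A², …, tr Aⁿ) ≤ 0. -/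
noncomputable section

lemma add_le_self_nonpos {a b : MP} (hb : b ≠ ⊥) (h : a + b ≤ b) : a ≤ 0 := by
  induction a using WithBot.recBotCoe with
  | bot => exact bot_le
  | coe s =>
    induction b using WithBot.recBotCoe with
    | bot => exact absurd rfl hb
    | coe r =>
      rw [← WithBot.coe_add, WithBot.coe_le_coe] at h
      exact_mod_cast (by linarith : s ≤ (0 : ℝ))

lemma pow_mulVec_le {n : ℕ} (A : Matrix (Fin n) (Fin n) MP) (x : Fin n → MP)
    (h : ∀ i, mpMulVec A x i ≤ x i) :
    ∀ k i, mpMulVec (mpPow A k) x i ≤ x i := by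
  intro k
  induction k with
  | zero =>
    intro i
    apply Finset.sup_le
    intro j _
    simp only [mpPow, mpId]
    by_cases hij : i = j
    · simp [hij]
    · simp [hij]
  | succ k ih =>
    intro i
    refine le_trans ?_ (h i)
    apply Finset.sup_le
    intro j _
    simp only [mpPow, mpMul]
    rw [Finset.comp_sup_eq_sup_comp (· + x j)
      (fun a b => (max_add_add_right a b (x j)).symm) (WithBot.bot_add _)]
    apply Finset.sup_le
    intro l _
    calc A i l + mpPow A k l j + x j = A i l + (mpPow A k l j + x j) := add_assoc _ _ _
      _ ≤ A i l + x l := by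
          apply add_le_add_right
          exact le_trans (Finset.le_sup (f := fun j' => mpPow A k l j' + x j')
            (Finset.mem_univ j)) (ih l)
      _ ≤ mpMulVec A x i := Finset.le_sup (f := fun l' => A i l' + x l') (Finset.mem_univ l)

theorem stmt7 {n : ℕ} (A : Matrix (Fin n) (Fin n) MP) (x : Fin n → MP) (hx : Regular x)
    (h : ∀ i, mpMulVec A x i ≤ x i) : mpTrFun A ≤ 0 := by
  apply Finset.sup_le
  intro k _
  apply Finset.sup_le
  intro i _
  apply add_le_self_nonpos (hx i)
  exact le_trans (Finset.le_sup (f := fun j => mpPow A k i j + x j) (Finset.mem_univ i))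
    (pow_mulVec_le A x h k i)
end
end

section
/- Sparsification preserves regular solutions: let a_1,…,a_n, b_1,…,b_n ∈ ℝ ∪ {-∞}, and define â_j = a_j if a_j > b_j and â_j = -∞ otherwise, and b̂_j = b_j if b_j ≥ a_j and b̂_j = -∞ otherwise. Then for all x_1,…,x_n ∈ ℝ, the inequality max_j (a_j + x_j) ≤ max_j (b_j + x_j) holds if and only if max_j (â_j + x_j) ≤ max_j (b̂_j + x_j). -/
noncomputable section

theorem stmt10 {n : ℕ} (a b : Fin n → MP) (x : Fin n → ℝ) :
    ((Finset.univ.sup fun j => a j + (x j : MP)) ≤ Finset.univ.sup fun j => b j + (x j : MP)) ↔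
      ((Finset.univ.sup fun j => (if b j < a j then a j else ⊥) + (x j : MP)) ≤
        Finset.univ.sup fun j => (if a j ≤ b j then b j else ⊥) + (x j : MP)) := by
  constructor
  · intro h
    by_cases hT : (Finset.univ.sup fun j => b j + (x j : MP)) = ⊥
    · -- then all a j = ⊥, so LHS sup is ⊥
      rw [hT] at h
      have hb : ∀ j, a j + (x j : MP) = ⊥ := by
        intro j
        have := le_trans (Finset.le_sup (Finset.mem_univ j)) h
        exact le_bot_iff.mp this
      have : (Finset.univ.sup fun j => (if b j < a j then a j else ⊥) + (x j : MP)) = ⊥ := by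
        apply le_bot_iff.mp
        apply Finset.sup_le
        intro j _
        split_ifs with hj
        · exact le_of_eq (hb j)
        · simp
      simp [this]
    · have hne : (Finset.univ : Finset (Fin n)).Nonempty := by
        by_contra hc
        rw [Finset.not_nonempty_iff_eq_empty] at hc
        simp [hc] at hT
      obtain ⟨k, -, hk⟩ := Finset.exists_mem_eq_sup Finset.univ hne
        (fun j => b j + (x j : MP))
      have hak : a k + (x k : MP) ≤ b k + (x k : MP) := by
        calc a k + (x k : MP)
            ≤ Finset.univ.sup fun j => a j + (x j : MP) :=
              Finset.le_sup (f := fun j => a j + (x j : MP)) (Finset.mem_univ k)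
          _ ≤ Finset.univ.sup fun j => b j + (x j : MP) := h
          _ = b k + (x k : MP) := hk
      have hab : a k ≤ b k :=
        (WithBot.add_le_add_iff_right (by exact WithBot.coe_ne_bot)).mp hak
      calc (Finset.univ.sup fun j => (if b j < a j then a j else ⊥) + (x j : MP))
          ≤ Finset.univ.sup fun j => a j + (x j : MP) := by
            apply Finset.sup_mono_fun
            intro j _
            gcongr
            split_ifs <;> simp
        _ ≤ Finset.univ.sup fun j => b j + (x j : MP) := h
        _ = b k + (x k : MP) := hk
        _ = (if a k ≤ b k then b k else ⊥) + (x k : MP) := by rw [if_pos hab]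
        _ ≤ _ := Finset.le_sup (f := fun j => (if a j ≤ b j then b j else ⊥) + (x j : MP))
              (Finset.mem_univ k)
  · intro h
    apply Finset.sup_le
    intro j _
    by_cases hj : b j < a j
    · calc a j + (x j : MP) = (if b j < a j then a j else ⊥) + (x j : MP) := by rw [if_pos hj]
        _ ≤ _ := Finset.le_sup (f := fun j => (if b j < a j then a j else ⊥) + (x j : MP))
              (Finset.mem_univ j)
        _ ≤ _ := h
        _ ≤ Finset.univ.sup fun j => b j + (x j : MP) := by
            apply Finset.sup_mono_fun
            intro j _
            exact add_le_add_left (by split_ifs <;> simp) _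
    · push_neg at hj
      calc a j + (x j : MP) ≤ b j + (x j : MP) := add_le_add_left hj _
        _ ≤ _ := Finset.le_sup (f := fun j => b j + (x j : MP)) (Finset.mem_univ j)
end
end

section
/- Let A, B be m×n matrices over the max-plus semiring, and let G be a strictly row-monomial matrix obtained from B by keeping one non-(-∞) entry in each row and setting the others to -∞ (so G ≤ B entrywise, G row-regular with exactly one finite entry per row). Set H = G⁻(A ⊕ B). Then H² ≥ H entrywise, and consequently H^{k+1} ≥ H^k for all k ≥ 1, so that H* = I ⊕ H ⊕ ⋯ ⊕ H^{n-1} = I ⊕ H^{n-1} and max(tr H, …, tr Hⁿ) = tr Hⁿ. -/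
noncomputable section

lemma MP.add_sup (a b c : MP) : a + (b ⊔ c) = (a + b) ⊔ (a + c) := by
  rcases le_total b c with h | h
  · rw [max_eq_right h, max_eq_right (add_le_add_right h a)]
  · rw [max_eq_left h, max_eq_left (add_le_add_right h a)]

lemma MP.sup_add (a b c : MP) : (a ⊔ b) + c = (a + c) ⊔ (b + c) := by
  rw [add_comm, MP.add_sup, add_comm c a, add_comm c b]

lemma MP.add_finsetSup {ι : Type*} (a : MP) (s : Finset ι) (f : ι → MP) :
    a + s.sup f = s.sup fun i => a + f i := by
  classical
  induction s using Finset.induction_on with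
  | empty => simp
  | insert _ _ hx ih => simp [Finset.sup_insert, MP.add_sup, ih]

lemma MP.finsetSup_add {ι : Type*} (a : MP) (s : Finset ι) (f : ι → MP) :
    s.sup f + a = s.sup fun i => f i + a := by
  rw [add_comm, MP.add_finsetSup]; simp [add_comm]

lemma mpMul_le_mpMul {m n p : ℕ} {A A' : Matrix (Fin m) (Fin n) MP}
    {B B' : Matrix (Fin n) (Fin p) MP} (hA : ∀ i j, A i j ≤ A' i j)
    (hB : ∀ i j, B i j ≤ B' i j) : ∀ i k, mpMul A B i k ≤ mpMul A' B' i k := by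
  intro i k
  exact Finset.sup_mono_fun fun j _ => add_le_add (hA i j) (hB j k)

lemma mpMul_assoc {m n p q : ℕ} (A : Matrix (Fin m) (Fin n) MP)
    (B : Matrix (Fin n) (Fin p) MP) (C : Matrix (Fin p) (Fin q) MP) :
    mpMul (mpMul A B) C = mpMul A (mpMul B C) := by
  funext i l
  unfold mpMul
  simp only [MP.finsetSup_add, MP.add_finsetSup]
  rw [Finset.sup_comm]
  exact Finset.sup_congr rfl fun j _ => Finset.sup_congr rfl fun k _ => (add_assoc _ _ _)

lemma mpMul_id {m n : ℕ} (A : Matrix (Fin m) (Fin n) MP) : mpMul A (mpId n) = A := by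
  funext i k
  apply le_antisymm
  · apply Finset.sup_le
    intro j _
    unfold mpId
    by_cases h : j = k
    · subst h; simp
    · simp [h]
  · have := Finset.le_sup (f := fun j => A i j + mpId n j k) (Finset.mem_univ k)
    simpa [mpId, mpMul] using this

lemma id_mpMul {m n : ℕ} (A : Matrix (Fin m) (Fin n) MP) : mpMul (mpId m) A = A := by
  funext i k
  apply le_antisymm
  · apply Finset.sup_le
    intro j _
    unfold mpId
    by_cases h : i = j
    · subst h; simp
    · simp [h]
  · have := Finset.le_sup (f := fun j => mpId m i j + A j k) (Finset.mem_univ i)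
    simpa [mpId, mpMul] using this

lemma mpPow_one {n : ℕ} (A : Matrix (Fin n) (Fin n) MP) : mpPow A 1 = A := by
  show mpMul A (mpId n) = A
  exact mpMul_id A

theorem stmt12 {m n : ℕ} (A B G : Matrix (Fin m) (Fin n) MP)
    (hB : RowRegular B) (hG : RowMonomial G)
    (hGle : ∀ i j, G i j ≤ B i j) (hGB : ∀ i j, G i j ≠ ⊥ → G i j = B i j)
    (H : Matrix (Fin n) (Fin n) MP) (hH : H = mpMul (mpConj G) (mpAdd A B)) :
    (∀ i j, H i j ≤ mpMul H H i j) ∧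
      (∀ k : ℕ, 1 ≤ k → ∀ i j, mpPow H k i j ≤ mpPow H (k + 1) i j) ∧
      (∀ i j, mpStar H i j = mpId n i j ⊔ mpPow H (n - 1) i j) ∧
      mpTrFun H = mpTr (mpPow H n) := by
  classical
  set M := mpAdd A B with hM
  -- key: M ⊗ G⁻ ≥ I_m
  have hkey : ∀ i j, mpId m i j ≤ mpMul M (mpConj G) i j := by
    intro i j
    by_cases hij : i = j
    · subst hij
      obtain ⟨k, hk, -⟩ := hG i
      obtain ⟨r, hr⟩ := WithBot.ne_bot_iff_exists.mp hk
      have hB' : B i k = (r : MP) := by rw [← hGB i k hk, ← hr]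
      have hterm : (0 : MP) ≤ M i k + mpConj G k i := by
        have hconj : mpConj G k i = ((-r : ℝ) : MP) := by
          simp [mpConj, ← hr]
        have hMik : (r : MP) ≤ M i k := by
          rw [hM]; exact le_trans (le_of_eq hB'.symm) le_sup_right
        calc (0 : MP) = (r : MP) + ((-r : ℝ) : MP) := by
              rw [← WithBot.coe_add]; norm_num
          _ ≤ M i k + mpConj G k i := by
              rw [hconj]; exact add_le_add_left hMik _
      calc mpId m i i = 0 := by simp [mpId]
        _ ≤ M i k + mpConj G k i := hterm
        _ ≤ mpMul M (mpConj G) i i :=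
              Finset.le_sup (f := fun j => M i j + mpConj G j i) (Finset.mem_univ k)
    · simp [mpId, hij]
  -- part 1 : H ≤ H²
  have h1 : ∀ i j, H i j ≤ mpMul H H i j := by
    intro i j
    have : mpMul H H = mpMul (mpConj G) (mpMul (mpMul M (mpConj G)) M) := by
      rw [hH, mpMul_assoc, ← mpMul_assoc M]
    rw [this]
    have hge : ∀ i j, mpMul (mpId m) M i j ≤ mpMul (mpMul M (mpConj G)) M i j :=
      mpMul_le_mpMul hkey (fun _ _ => le_rfl)
    have : H i j = mpMul (mpConj G) (mpMul (mpId m) M) i j := by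
      rw [id_mpMul, hH]
    rw [this]
    exact mpMul_le_mpMul (fun _ _ => le_rfl) hge i j
  -- part 2 : H^k ≤ H^(k+1) for k ≥ 1
  have h2 : ∀ k : ℕ, 1 ≤ k → ∀ i j, mpPow H k i j ≤ mpPow H (k + 1) i j := by
    intro k hk
    induction k with
    | zero => omega
    | succ k ih =>
      rcases Nat.eq_or_lt_of_le hk with h | h
      · intro i j
        have e1 : mpPow H 1 = H := mpPow_one H
        have e2 : mpPow H 2 = mpMul H H := by
          show mpMul H (mpPow H 1) = _
          rw [e1]
        rw [← h]
        rw [show (1:ℕ) + 1 = 2 from rfl, e1, e2]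
        exact h1 i j
      · have hk' : 1 ≤ k := by omega
        intro i j
        exact mpMul_le_mpMul (A' := H) (fun _ _ => le_rfl) (ih hk') i j
  -- chain : H^a ≤ H^b for 1 ≤ a ≤ b
  have hchain : ∀ a b : ℕ, 1 ≤ a → a ≤ b → ∀ i j, mpPow H a i j ≤ mpPow H b i j := by
    intro a b ha hab
    induction b with
    | zero => intro i j; omega
    | succ b ih =>
      rcases Nat.eq_or_lt_of_le hab with h | h
      · subst h; intro i j; exact le_rfl
      · intro i j
        have hab' : a ≤ b := by omega
        exact le_trans (ih hab' i j) (h2 b (by omega) i j)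
  refine ⟨h1, h2, ?_, ?_⟩
  · -- mpStar
    intro i j
    have hn : 1 ≤ n := Nat.one_le_iff_ne_zero.mpr (by rintro rfl; exact i.elim0)
    apply le_antisymm
    · apply Finset.sup_le
      intro k hk
      rw [Finset.mem_range] at hk
      rcases Nat.eq_zero_or_pos k with h | h
      · subst h
        exact le_sup_left
      · exact le_trans (hchain k (n - 1) h (by omega) i j) le_sup_right
    · apply sup_le
      · have : mpId n i j = mpPow H 0 i j := rfl
        rw [this]
        exact Finset.le_sup (f := fun k => mpPow H k i j) (Finset.mem_range.mpr (by omega))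
      · exact Finset.le_sup (f := fun k => mpPow H k i j) (Finset.mem_range.mpr (by omega))
  · -- mpTrFun
    rcases Nat.eq_zero_or_pos n with h | h
    · subst h
      simp [mpTrFun, mpTr]
    · apply le_antisymm
      · apply Finset.sup_le
        intro k hk
        rw [Finset.mem_Icc] at hk
        apply Finset.sup_le
        intro i _
        exact le_trans (hchain k n hk.1 hk.2 i i)
          (Finset.le_sup (f := fun i => mpPow H n i i) (Finset.mem_univ i))
      · exact Finset.le_sup (f := fun k => mpTr (mpPow H k)) (Finset.mem_Icc.mpr ⟨h, le_rfl⟩)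
end
end

section
/- Let A, B be m×n matrices over the max-plus semiring and G a strictly row-monomial matrix with G ≤ B entrywise and the finite entries of G taken from B. Set H = G⁻(A ⊕ B) and suppose tr Hⁿ ≤ 0 (equivalently Tr(H) ≤ 0). Then B H* ≥ A H* entrywise; consequently every vector x = H*u with regular u satisfies A x ≤ B x. -/
noncomputable section

/- ### Auxiliary lemmas -/

lemma mp_add_sup' (a b c : MP) : a + (b ⊔ c) = (a+b) ⊔ (a+c) := by
  rcases le_total b c with h|h
  · rw [sup_eq_right.2 h, sup_eq_right.2 (add_le_add_right h a)]
  · rw [sup_eq_left.2 h, sup_eq_left.2 (add_le_add_right h a)]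

lemma mp_add_finsetSup {α} (s : Finset α) (f : α → MP) (a : MP) :
    a + s.sup f = s.sup (fun x => a + f x) := by
  induction s using Finset.cons_induction with
  | empty => simp [WithBot.add_bot]
  | cons x s hx ih => simp [Finset.sup_cons, mp_add_sup', ih]

lemma mp_finsetSup_add {α} (s : Finset α) (f : α → MP) (a : MP) :
    s.sup f + a = s.sup (fun x => f x + a) := by
  rw [add_comm, mp_add_finsetSup]; simp [add_comm]

lemma mp_sup_ne_bot {α} (s : Finset α) (f : α → MP) (h : s.sup f ≠ ⊥) :
    ∃ x ∈ s, f x ≠ ⊥ := by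
  by_contra hc
  push_neg at hc
  exact h (le_antisymm (Finset.sup_le fun x hx => (hc x hx).le) bot_le)

lemma mp_add_ne_bot_left {a b : MP} (h : a + b ≠ ⊥) : a ≠ ⊥ := by
  intro ha; exact h (by simp [ha, WithBot.bot_add])

lemma mp_add_ne_bot_right {a b : MP} (h : a + b ≠ ⊥) : b ≠ ⊥ := by
  intro hb; exact h (by simp [hb, WithBot.add_bot])

lemma mpMulVec_assoc {m n p : ℕ} (A : Matrix (Fin m) (Fin n) MP)
    (S : Matrix (Fin n) (Fin p) MP) (u : Fin p → MP) :
    mpMulVec (mpMul A S) u = mpMulVec A (mpMulVec S u) := by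
  funext i
  show (Finset.univ.sup fun k => (Finset.univ.sup fun j => A i j + S j k) + u k)
      = Finset.univ.sup fun j => A i j + Finset.univ.sup fun k => S j k + u k
  calc (Finset.univ.sup fun k => (Finset.univ.sup fun j => A i j + S j k) + u k)
      = Finset.univ.sup (fun k => Finset.univ.sup fun j => A i j + S j k + u k) := by
        apply Finset.sup_congr rfl; intro k _; rw [mp_finsetSup_add]
    _ = Finset.univ.sup (fun j => Finset.univ.sup fun k => A i j + S j k + u k) :=
        Finset.sup_comm _ _ _
    _ = _ := by
        apply Finset.sup_congr rfl; intro j _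
        rw [mp_add_finsetSup]; simp only [add_assoc]

/-- Path weight lower-bounds the matrix power. -/
lemma mp_wt_le_pow {n : ℕ} (H : Matrix (Fin n) (Fin n) MP) (p : ℕ → Fin n) :
    ∀ d a, (∑ t ∈ Finset.Ico a (a+d), H (p t) (p (t+1))) ≤ mpPow H d (p a) (p (a+d)) := by
  intro d
  induction d with
  | zero => intro a; simp [mpPow, mpId]
  | succ d ih =>
    intro a
    have hsplit : (∑ t ∈ Finset.Ico a (a+(d+1)), H (p t) (p (t+1)))
        = H (p a) (p (a+1)) + ∑ t ∈ Finset.Ico (a+1) (a+(d+1)), H (p t) (p (t+1)) :=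
      Finset.sum_eq_sum_Ico_succ_bot (by omega) _
    rw [hsplit]
    have h1 : (∑ t ∈ Finset.Ico (a+1) (a+(d+1)), H (p t) (p (t+1)))
        ≤ mpPow H d (p (a+1)) (p ((a+1)+d)) := by
      have := ih (a+1); rwa [show a+1+d = a+(d+1) by omega] at this ⊢
    calc H (p a) (p (a+1)) + ∑ t ∈ Finset.Ico (a+1) (a+(d+1)), H (p t) (p (t+1))
        ≤ H (p a) (p (a+1)) + mpPow H d (p (a+1)) (p ((a+1)+d)) := add_le_add_right h1 _
      _ ≤ mpPow H (d+1) (p a) (p (a+(d+1))) := by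
          rw [show a+1+d = a+(d+1) by omega]
          exact Finset.le_sup (f := fun v => H (p a) v + mpPow H d v (p (a+(d+1))))
            (Finset.mem_univ (p (a+1)))

/-- A non-bottom entry of a matrix power is achieved by a path. -/
lemma mp_pow_extract {n : ℕ} (H : Matrix (Fin n) (Fin n) MP) :
    ∀ k (i j : Fin n), mpPow H k i j ≠ ⊥ →
      ∃ p : ℕ → Fin n, p 0 = i ∧ p k = j ∧
        mpPow H k i j = ∑ t ∈ Finset.range k, H (p t) (p (t+1)) := by
  intro k
  induction k with
  | zero =>
    intro i j h
    have hij : i = j := by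
      by_contra hne
      exact h (by simp [mpPow, mpId, hne])
    exact ⟨fun _ => i, rfl, hij, by simp [mpPow, mpId, hij]⟩
  | succ k ih =>
    intro i j h
    have hne : (Finset.univ : Finset (Fin n)).Nonempty := ⟨i, Finset.mem_univ i⟩
    obtain ⟨v, _, hv⟩ := Finset.exists_mem_eq_sup Finset.univ hne
      (fun v => H i v + mpPow H k v j)
    have hEq : mpPow H (k+1) i j = H i v + mpPow H k v j := hv
    rw [hEq] at h ⊢
    obtain ⟨q, hq0, hqk, hqw⟩ := ih v j (mp_add_ne_bot_right h)
    refine ⟨fun t => if t = 0 then i else q (t-1), by simp, by simp [hqk], ?_⟩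
    rw [Finset.sum_range_succ']
    simp only [Nat.add_sub_cancel, Nat.succ_ne_zero, if_false, if_pos, ite_true, ite_false,
      reduceIte]
    rw [hq0, hqw, add_comm]

/-- Power superadditivity: H^a ⊗ H^c ≤ H^(a+c) entrywise through any midpoint. -/
lemma mp_pow_mul_pow_le {n : ℕ} (H : Matrix (Fin n) (Fin n) MP) :
    ∀ (a : ℕ) (c : ℕ) (i v j : Fin n), mpPow H a i v + mpPow H c v j ≤ mpPow H (a+c) i j := by
  intro a
  induction a with
  | zero =>
    intro c i v j
    by_cases hiv : i = v
    · subst hiv; simp [mpPow, mpId, zero_add]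
    · simp [mpPow, mpId, hiv, WithBot.bot_add]
  | succ a ih =>
    intro c i v j
    show (Finset.univ.sup fun w => H i w + mpPow H a w v) + mpPow H c v j ≤ _
    rw [mp_finsetSup_add]
    apply Finset.sup_le
    intro w _
    rw [add_assoc]
    calc H i w + (mpPow H a w v + mpPow H c v j)
        ≤ H i w + mpPow H (a+c) w j := add_le_add_right (ih c w v j) _
      _ ≤ mpPow H (a+1+c) i j := by
          rw [show a+1+c = (a+c)+1 by omega]
          exact Finset.le_sup (f := fun w => H i w + mpPow H (a+c) w j) (Finset.mem_univ w)

/-- Diagonal entries of powers are monotone when active rows have nonneg diagonal. -/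
lemma mp_diag_mono {n : ℕ} (H : Matrix (Fin n) (Fin n) MP)
    (hdiag : ∀ j j', H j j' ≠ ⊥ → (0:MP) ≤ H j j) :
    ∀ k, 1 ≤ k → ∀ v, mpPow H k v v ≤ mpPow H (k+1) v v := by
  intro k hk v
  by_cases hb : mpPow H k v v = ⊥
  · rw [hb]; exact bot_le
  · obtain ⟨s, rfl⟩ : ∃ s, k = s + 1 := ⟨k - 1, by omega⟩
    have : mpPow H (s+1) v v = Finset.univ.sup fun w => H v w + mpPow H s w v := rfl
    rw [this] at hb
    obtain ⟨w, _, hw⟩ := mp_sup_ne_bot _ _ hb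
    have h0 : (0:MP) ≤ H v v := hdiag v w (mp_add_ne_bot_left hw)
    calc mpPow H (s+1) v v = 0 + mpPow H (s+1) v v := (zero_add _).symm
      _ ≤ H v v + mpPow H (s+1) v v := add_le_add_left h0 _
      _ ≤ mpPow H (s+1+1) v v :=
          Finset.le_sup (f := fun w => H v w + mpPow H (s+1) w v) (Finset.mem_univ v)

lemma mp_diag_le {n : ℕ} (H : Matrix (Fin n) (Fin n) MP)
    (hdiag : ∀ j j', H j j' ≠ ⊥ → (0:MP) ≤ H j j) :
    ∀ k, 1 ≤ k → k ≤ n → ∀ v, mpPow H k v v ≤ mpPow H n v v := by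
  have key : ∀ d k, 1 ≤ k → ∀ v, mpPow H k v v ≤ mpPow H (k+d) v v := by
    intro d
    induction d with
    | zero => intro k _ v; exact le_rfl
    | succ d ih =>
      intro k hk v
      calc mpPow H k v v ≤ mpPow H (k+d) v v := ih k hk v
        _ ≤ mpPow H (k+d+1) v v := mp_diag_mono H hdiag (k+d) (by omega) v
  intro k hk hkn v
  have := key (n-k) k hk v
  rwa [show k + (n-k) = n by omega] at this

/-- Main lemma: all powers are dominated by the bounded star. -/
lemma mp_pow_le_star {n : ℕ} (H : Matrix (Fin n) (Fin n) MP)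
    (hdiag : ∀ j j', H j j' ≠ ⊥ → (0:MP) ≤ H j j)
    (htr : mpTr (mpPow H n) ≤ 0) :
    ∀ k (i j : Fin n), mpPow H k i j ≤ mpStar H i j := by
  intro k
  induction k using Nat.strong_induction_on with
  | _ k IH =>
    intro i j
    by_cases hk : k < n
    · exact Finset.le_sup (f := fun k => mpPow H k i j) (Finset.mem_range.2 hk)
    · push_neg at hk
      have hn : 0 < n := i.pos
      by_cases hb : mpPow H k i j = ⊥
      · rw [hb]; exact bot_le
      obtain ⟨p, hp0, hpk, hpw⟩ := mp_pow_extract H k i j hb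
      suffices key : ∀ a' b' : ℕ, a' < b' → b' ≤ n → p a' = p b' →
          mpPow H k i j ≤ mpStar H i j by
        obtain ⟨a, b, hab, heq⟩ := Fintype.exists_ne_map_eq_of_card_lt
          (fun t : Fin (n+1) => p t) (by simp)
        have hvne : (a:ℕ) ≠ (b:ℕ) := fun h => hab (Fin.ext h)
        rcases Nat.lt_or_ge (a:ℕ) (b:ℕ) with h|h
        · exact key a b h (by omega) heq
        · exact key b a (by omega) (by omega) heq.symm
      intro a' b' hlt hb'n hpab
      have hb'k : b' ≤ k := le_trans hb'n hk
      -- split the sum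
      have hs1 : (∑ t ∈ Finset.Ico 0 b', H (p t) (p (t+1)))
          + (∑ t ∈ Finset.Ico b' k, H (p t) (p (t+1)))
          = ∑ t ∈ Finset.range k, H (p t) (p (t+1)) := by
        rw [Finset.range_eq_Ico]
        exact Finset.sum_Ico_consecutive _ (Nat.zero_le _) hb'k
      have hs2 : (∑ t ∈ Finset.Ico 0 a', H (p t) (p (t+1)))
          + (∑ t ∈ Finset.Ico a' b', H (p t) (p (t+1)))
          = ∑ t ∈ Finset.Ico 0 b', H (p t) (p (t+1)) :=
        Finset.sum_Ico_consecutive _ (Nat.zero_le _) (le_of_lt hlt)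
      -- bound the middle cycle
      have hmid : (∑ t ∈ Finset.Ico a' b', H (p t) (p (t+1))) ≤ 0 := by
        have h1 : (∑ t ∈ Finset.Ico a' (a'+(b'-a')), H (p t) (p (t+1)))
            ≤ mpPow H (b'-a') (p a') (p (a'+(b'-a'))) := mp_wt_le_pow H p (b'-a') a'
        rw [show a'+(b'-a') = b' by omega] at h1
        calc (∑ t ∈ Finset.Ico a' b', H (p t) (p (t+1)))
            ≤ mpPow H (b'-a') (p a') (p b') := h1
          _ = mpPow H (b'-a') (p a') (p a') := by rw [hpab]
          _ ≤ mpPow H n (p a') (p a') := mp_diag_le H hdiag (b'-a') (by omega) (by omega) _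
          _ ≤ mpTr (mpPow H n) := Finset.le_sup (f := fun v => mpPow H n v v) (Finset.mem_univ _)
          _ ≤ 0 := htr
      -- bound the outer parts
      have hout1 : (∑ t ∈ Finset.Ico 0 a', H (p t) (p (t+1))) ≤ mpPow H a' i (p a') := by
        have := mp_wt_le_pow H p a' 0
        rwa [Nat.zero_add, hp0] at this
      have hout2 : (∑ t ∈ Finset.Ico b' k, H (p t) (p (t+1))) ≤ mpPow H (k-b') (p a') j := by
        have := mp_wt_le_pow H p (k-b') b'
        rwa [show b'+(k-b') = k by omega, hpk, ← hpab] at this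
      have hlt2 : a' + (k - b') < k := by omega
      calc mpPow H k i j = ∑ t ∈ Finset.range k, H (p t) (p (t+1)) := hpw
        _ = ((∑ t ∈ Finset.Ico 0 a', H (p t) (p (t+1)))
              + (∑ t ∈ Finset.Ico a' b', H (p t) (p (t+1))))
              + (∑ t ∈ Finset.Ico b' k, H (p t) (p (t+1))) := by rw [hs2, hs1]
        _ ≤ ((∑ t ∈ Finset.Ico 0 a', H (p t) (p (t+1))) + 0)
              + (∑ t ∈ Finset.Ico b' k, H (p t) (p (t+1))) :=
            add_le_add_left (add_le_add_right hmid _) _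
        _ = (∑ t ∈ Finset.Ico 0 a', H (p t) (p (t+1)))
              + (∑ t ∈ Finset.Ico b' k, H (p t) (p (t+1))) := by rw [add_zero]
        _ ≤ mpPow H a' i (p a') + mpPow H (k-b') (p a') j := add_le_add hout1 hout2
        _ ≤ mpPow H (a' + (k-b')) i j := mp_pow_mul_pow_le H a' (k-b') i (p a') j
        _ ≤ mpStar H i j := IH _ hlt2 i j

theorem stmt13 {m n : ℕ} (A B G : Matrix (Fin m) (Fin n) MP)
    (hG : RowMonomial G)
    (hGle : ∀ i j, G i j ≤ B i j) (hGB : ∀ i j, G i j ≠ ⊥ → G i j = B i j)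
    (H : Matrix (Fin n) (Fin n) MP) (hH : H = mpMul (mpConj G) (mpAdd A B))
    (htr : mpTr (mpPow H n) ≤ 0) :
    (∀ i j, mpMul A (mpStar H) i j ≤ mpMul B (mpStar H) i j) ∧
      ∀ u : Fin n → MP, Regular u →
        ∀ i, mpMulVec A (mpMulVec (mpStar H) u) i ≤ mpMulVec B (mpMulVec (mpStar H) u) i := by
  have hdiag : ∀ j j' : Fin n, H j j' ≠ ⊥ → (0:MP) ≤ H j j := by
    intro j j' hne
    rw [hH] at hne ⊢
    obtain ⟨i, _, hi⟩ := mp_sup_ne_bot _ _ hne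
    have hGij : G i j ≠ ⊥ := by
      intro hgb
      exact mp_add_ne_bot_left hi (by simp [mpConj, hgb])
    obtain ⟨r, hr⟩ := WithBot.ne_bot_iff_exists.1 hGij
    have hconj : mpConj G j i = ((-r : ℝ) : MP) := by simp [mpConj, ← hr]
    have hAB : ((r:ℝ) : MP) ≤ mpAdd A B i j := by
      have : G i j = B i j := hGB i j hGij
      rw [hr, this]; exact le_sup_right
    calc (0:MP) = ((-r:ℝ):MP) + ((r:ℝ):MP) := by
          rw [← WithBot.coe_add]; norm_num
      _ ≤ mpConj G j i + mpAdd A B i j := by rw [hconj]; exact add_le_add_right hAB _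
      _ ≤ mpMul (mpConj G) (mpAdd A B) j j :=
          Finset.le_sup (f := fun i => mpConj G j i + mpAdd A B i j) (Finset.mem_univ i)
  have hHstar : ∀ i j : Fin n, mpMul H (mpStar H) i j ≤ mpStar H i j := by
    intro i j
    apply Finset.sup_le
    intro l _
    show H i l + mpStar H l j ≤ _
    rw [show mpStar H l j = (Finset.range n).sup fun k => mpPow H k l j from rfl,
      mp_add_finsetSup]
    apply Finset.sup_le
    intro k _
    calc H i l + mpPow H k l j
        ≤ mpPow H (k+1) i j :=
          Finset.le_sup (f := fun v => H i v + mpPow H k v j) (Finset.mem_univ l)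
      _ ≤ mpStar H i j := mp_pow_le_star H hdiag htr (k+1) i j
  have hBGdiag : ∀ i : Fin m, (0:MP) ≤ mpMul B (mpConj G) i i := by
    intro i
    obtain ⟨j, hj, _⟩ := hG i
    obtain ⟨r, hr⟩ := WithBot.ne_bot_iff_exists.1 hj
    have hconj : mpConj G j i = ((-r : ℝ) : MP) := by simp [mpConj, ← hr]
    have hBij : B i j = ((r:ℝ):MP) := by rw [← hGB i j hj, ← hr]
    calc (0:MP) = ((r:ℝ):MP) + ((-r:ℝ):MP) := by rw [← WithBot.coe_add]; norm_num
      _ = B i j + mpConj G j i := by rw [hconj, hBij]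
      _ ≤ mpMul B (mpConj G) i i :=
          Finset.le_sup (f := fun j => B i j + mpConj G j i) (Finset.mem_univ j)
  have step1 : ∀ (X : Matrix (Fin m) (Fin n) MP) (i : Fin m) (l : Fin n),
      X i l ≤ mpMul (mpMul B (mpConj G)) X i l := by
    intro X i l
    calc X i l = 0 + X i l := (zero_add _).symm
      _ ≤ mpMul B (mpConj G) i i + X i l := add_le_add_left (hBGdiag i) _
      _ ≤ mpMul (mpMul B (mpConj G)) X i l :=
          Finset.le_sup (f := fun v => mpMul B (mpConj G) i v + X v l) (Finset.mem_univ i)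
  have hmonoR : ∀ (C C' : Matrix (Fin n) (Fin n) MP), (∀ v l, C v l ≤ C' v l) →
      ∀ (i : Fin m) (l : Fin n), mpMul B C i l ≤ mpMul B C' i l := by
    intro C C' hC i l
    apply Finset.sup_le
    intro v _
    exact le_trans (add_le_add_right (hC v l) _)
      (Finset.le_sup (f := fun v => B i v + C' v l) (Finset.mem_univ v))
  have main : ∀ (i : Fin m) (l : Fin n), mpMul A (mpStar H) i l ≤ mpMul B (mpStar H) i l := by
    intro i l
    have h1 : mpMul A (mpStar H) i l ≤ mpMul (mpAdd A B) (mpStar H) i l := by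
      apply Finset.sup_le
      intro v _
      exact le_trans (add_le_add_left (le_sup_left : A i v ≤ mpAdd A B i v) _)
        (Finset.le_sup (f := fun v => mpAdd A B i v + mpStar H v l) (Finset.mem_univ v))
    have hassoc : mpMul (mpMul B (mpConj G)) (mpMul (mpAdd A B) (mpStar H))
        = mpMul B (mpMul H (mpStar H)) := by
      rw [mpMul_assoc, ← mpMul_assoc (mpConj G), ← hH]
    calc mpMul A (mpStar H) i l
        ≤ mpMul (mpAdd A B) (mpStar H) i l := h1
      _ ≤ mpMul (mpMul B (mpConj G)) (mpMul (mpAdd A B) (mpStar H)) i l := step1 _ i l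
      _ = mpMul B (mpMul H (mpStar H)) i l := by rw [hassoc]
      _ ≤ mpMul B (mpStar H) i l := hmonoR _ _ hHstar i l
  refine ⟨main, ?_⟩
  intro u _ i
  rw [← mpMulVec_assoc, ← mpMulVec_assoc]
  apply Finset.sup_le
  intro j _
  exact le_trans (add_le_add_left (main i j) _)
    (Finset.le_sup (f := fun j => mpMul B (mpStar H) i j + u j) (Finset.mem_univ j))
end
end

section
/- Correctness of the second pruning criterion: under the setting of the backtracking procedure, fix entry b_{pq} ≠ -∞ in row p, and suppose for some row i and index j ≠ q that b_{iq} - b_{pq} + max(a_{pj}, b_{pj}) ≥ b_{ij}. Then for any finite x_1,…,x_n with b_{pq} + x_q ≥ max_k (max(a_{pk}, b_{pk}) + x_k), one has b_{iq} + x_q ≥ b_{ij} + x_j; hence the term b_{ij} + x_j never exceeds b_{iq} + x_q and setting b_{ij} to -∞ does not change the value of max_k (b_{ik} + x_k) ⊕ (b_{iq} + x_q). -/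
noncomputable section

theorem stmt18 {m n : ℕ} (a b : Matrix (Fin m) (Fin n) MP)
    (p i : Fin m) (q j : Fin n) (hj : j ≠ q)
    (βpq βiq : ℝ) (hpq : b p q = (βpq : MP)) (hiq : b i q = (βiq : MP))
    (hcrit : b i j ≤ ((βiq - βpq : ℝ) : MP) + (a p j ⊔ b p j))
    (x : Fin n → ℝ)
    (hx : (Finset.univ.sup fun k => (a p k ⊔ b p k) + (x k : MP)) ≤ ((βpq + x q : ℝ) : MP)) :
    b i j + (x j : MP) ≤ ((βiq + x q : ℝ) : MP) ∧
      ((Finset.univ.sup fun k => (if k = j then (⊥ : MP) else b i k) + (x k : MP)) ⊔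
          ((βiq + x q : ℝ) : MP) =
        (Finset.univ.sup fun k => b i k + (x k : MP)) ⊔ ((βiq + x q : ℝ) : MP)) := by
  have hjx : (a p j ⊔ b p j) + (x j : MP) ≤ ((βpq + x q : ℝ) : MP) :=
    le_trans (Finset.le_sup (f := fun k => (a p k ⊔ b p k) + (x k : MP)) (Finset.mem_univ j)) hx
  have key : b i j + (x j : MP) ≤ ((βiq + x q : ℝ) : MP) := by
    calc b i j + (x j : MP)
        ≤ (((βiq - βpq : ℝ) : MP) + (a p j ⊔ b p j)) + (x j : MP) :=
          add_le_add hcrit le_rfl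
      _ = ((βiq - βpq : ℝ) : MP) + ((a p j ⊔ b p j) + (x j : MP)) := add_assoc _ _ _
      _ ≤ ((βiq - βpq : ℝ) : MP) + ((βpq + x q : ℝ) : MP) := add_le_add le_rfl hjx
      _ = ((βiq + x q : ℝ) : MP) := by
          norm_cast; ring
  refine ⟨key, le_antisymm ?_ ?_⟩
  · apply sup_le _ le_sup_right
    apply le_trans _ le_sup_left
    apply Finset.sup_le
    intro k _
    refine le_trans ?_ (Finset.le_sup (Finset.mem_univ k))
    split
    · simp
    · exact le_rfl
  · apply sup_le _ le_sup_right
    apply Finset.sup_le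
    intro k _
    by_cases hk : k = j
    · subst hk
      exact le_trans key le_sup_right
    · refine le_trans ?_ (le_trans (Finset.le_sup (Finset.mem_univ k)) le_sup_left)
      simp [hk]
end
end
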